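/- Let G be a connected graph with σ₂(G) ≥ |V(G)| - k (k ≥ 2) that has no spanning tree with at most k leaves, and let P be a longest path in G. Then |V(G)| = |V(P)| + k - 1, and every vertex not on P has a neighbor on P. -/

import Mathlib

open SimpleGraph

/-- The degree of a vertex, as the cardinality of its neighbor set. -/
noncomputable def SimpleGraph.deg' {V : Type*} (G : SimpleGraph V) (u : V) : ℕ :=
  (G.neighborSet u).ncard

/-- `G` has a spanning tree with at most `k` leaves. -/
def SimpleGraph.HasSpanningKEndedTree {V : Type*} (G : SimpleGraph V) (k : ℕ) : Prop :=
  ∃ T : SimpleGraph V, T ≤ G ∧ T.IsTree ∧ {x : V | (T.neighborSet x).ncard = 1}.ncard ≤ k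

section Aux
variable {V : Type*} {G : SimpleGraph V}

lemma aux_isolated {K : SimpleGraph V} {x y : V} (hxy : x ≠ y)
    (hiso : ∀ z, ¬K.Adj x z) : ¬K.Reachable x y := by
  rintro ⟨W⟩
  cases W with
  | nil => exact hxy rfl
  | cons h _ => exact hiso _ h

lemma aux_reach_sup_edge {K : SimpleGraph V} {a b x y : V}
    (h : (K ⊔ edge a b).Reachable x y) :
    K.Reachable x y ∨ (K.Reachable x a ∧ K.Reachable b y) ∨
      (K.Reachable x b ∧ K.Reachable a y) := by
  obtain ⟨W⟩ := h
  induction W with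
  | nil => exact Or.inl (Reachable.refl _)
  | @cons s t w h W ih =>
    rcases h with h | h
    · rcases ih with h' | ⟨h1, h2⟩ | ⟨h1, h2⟩
      · exact Or.inl (h.reachable.trans h')
      · exact Or.inr (Or.inl ⟨h.reachable.trans h1, h2⟩)
      · exact Or.inr (Or.inr ⟨h.reachable.trans h1, h2⟩)
    · rw [edge_adj] at h
      obtain ⟨(⟨rfl, rfl⟩ | ⟨rfl, rfl⟩), hne⟩ := h
      · rcases ih with h' | ⟨h1, h2⟩ | ⟨h1, h2⟩
        · exact Or.inr (Or.inl ⟨Reachable.refl _, h'⟩)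
        · exact Or.inl (h1.symm.trans h2)
        · exact Or.inl h2
      · rcases ih with h' | ⟨h1, h2⟩ | ⟨h1, h2⟩
        · exact Or.inr (Or.inr ⟨Reachable.refl _, h'⟩)
        · exact Or.inl h2
        · exact Or.inl (h1.symm.trans h2)

lemma aux_acyclic_sup_edge {K : SimpleGraph V} {a b : V} (hac : K.IsAcyclic)
    (hr : ¬K.Reachable a b) : (K ⊔ edge a b).IsAcyclic := by
  have hab : a ≠ b := fun h => hr (h ▸ Reachable.refl a)
  have hKab : ¬K.Adj a b := fun h => hr h.reachable
  rw [isAcyclic_iff_forall_edge_isBridge]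
  intro e he
  rw [edgeSet_sup, edge_edgeSet_of_ne hab] at he
  rcases he with he | he
  · -- e ∈ K.edgeSet
    induction e with
    | h x y =>
      have hxy : K.Adj x y := he
      have hbr := (isAcyclic_iff_forall_edge_isBridge.mp hac) he
      rw [isBridge_iff] at hbr ⊢
      have hrw : (K ⊔ edge a b) \ fromEdgeSet {s(x, y)}
          = (K \ fromEdgeSet {s(x, y)}) ⊔ edge a b := by
        ext c d
        simp only [sdiff_adj, sup_adj, fromEdgeSet_adj, Set.mem_singleton_iff, edge_adj]
        constructor
        · rintro ⟨hcd | hcd, hne⟩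
          · exact Or.inl ⟨hcd, hne⟩
          · exact Or.inr hcd
        · rintro (⟨hcd, hne⟩ | hcd)
          · exact ⟨Or.inl hcd, hne⟩
          · refine ⟨Or.inr hcd, ?_⟩
            rintro ⟨heq, -⟩
            obtain ⟨(⟨rfl, rfl⟩ | ⟨rfl, rfl⟩), -⟩ := hcd
            all_goals rw [Sym2.eq_iff] at heq
            all_goals rcases heq with ⟨rfl, rfl⟩ | ⟨rfl, rfl⟩ <;>
              first | exact hKab hxy | exact hKab hxy.symm
      rw [deleteEdges, hrw]
      intro hreach
      rcases aux_reach_sup_edge hreach with h' | ⟨h1, h2⟩ | ⟨h1, h2⟩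
      · exact hbr h'
      · have h1' : K.Reachable x a := h1.mono (sdiff_le)
        have h2' : K.Reachable b y := h2.mono (sdiff_le)
        exact hr (h1'.symm.trans (hxy.reachable.trans h2'.symm))
      · have h1' : K.Reachable x b := h1.mono (sdiff_le)
        have h2' : K.Reachable a y := h2.mono (sdiff_le)
        exact hr (h2'.trans (hxy.symm.reachable.trans h1'))
  · -- e = s(a,b)
    subst he
    rw [isBridge_iff]
    · have hrw : (K ⊔ edge a b) \ fromEdgeSet {s(a, b)} = K := by
        ext c d
        simp only [sdiff_adj, sup_adj, fromEdgeSet_adj, Set.mem_singleton_iff, edge_adj]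
        constructor
        · rintro ⟨hcd | ⟨hcd, hne⟩, hnotmem⟩
          · exact hcd
          · exact absurd ⟨by rcases hcd with ⟨rfl, rfl⟩ | ⟨rfl, rfl⟩ <;> simp [Sym2.eq_iff], hne⟩
              hnotmem
        · intro hcd
          refine ⟨Or.inl hcd, ?_⟩
          rintro ⟨heq, -⟩
          rw [Sym2.eq_iff] at heq
          rcases heq with ⟨rfl, rfl⟩ | ⟨rfl, rfl⟩
          · exact hKab hcd
          · exact hKab hcd.symm
      rw [deleteEdges, hrw]
      exact hr

lemma aux_exists_tree [Finite V] {G A : SimpleGraph V} (hAG : A ≤ G)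
    (hA : A.IsAcyclic) (hG : G.Connected) :
    ∃ T : SimpleGraph V, A ≤ T ∧ T ≤ G ∧ T.IsTree := by
  classical
  set S : Set (SimpleGraph V) := {T | A ≤ T ∧ T ≤ G ∧ T.IsAcyclic} with hS
  have hfin : S.Finite := Set.toFinite S
  have hne : S.Nonempty := ⟨A, le_refl A, hAG, hA⟩
  obtain ⟨T, hTS, hmax⟩ := Set.Finite.exists_maximalFor id S hfin hne
  obtain ⟨hAT, hTG, hTac⟩ := hTS
  refine ⟨T, hAT, hTG, ?_, hTac⟩
  -- connectivity
  have step : ∀ x c : V, G.Adj x c → T.Reachable x c := by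
    intro x c h
    by_contra hnr
    have hxc : x ≠ c := h.ne
    have hT' : T ⊔ edge x c ∈ S := by
      refine ⟨le_trans hAT le_sup_left, sup_le hTG ?_, aux_acyclic_sup_edge hTac hnr⟩
      intro p q hpq
      rw [edge_adj] at hpq
      rcases hpq with ⟨⟨rfl, rfl⟩ | ⟨rfl, rfl⟩, -⟩
      · exact h
      · exact h.symm
    have := le_antisymm le_sup_left (hmax hT' le_sup_left)
    apply hnr
    have : T.Adj x c := by
      rw [show T = T ⊔ edge x c from this]
      exact Or.inr (by rw [edge_adj]; exact ⟨Or.inl ⟨rfl, rfl⟩, hxc⟩)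
    exact this.reachable
  rw [connected_iff]
  refine ⟨?_, hG.nonempty⟩
  intro x y
  obtain ⟨W⟩ := hG.preconnected x y
  induction W with
  | nil => exact Reachable.refl _
  | cons h W ih => exact (step _ _ h).trans ih

lemma spanningCoe_sup (A B : G.Subgraph) :
    (A ⊔ B).spanningCoe = A.spanningCoe ⊔ B.spanningCoe := by
  ext x y
  simp [Subgraph.sup_adj]

lemma spanningCoe_singleton (w : V) :
    (SimpleGraph.singletonSubgraph G w).spanningCoe = ⊥ := by
  ext x y
  simp [SimpleGraph.singletonSubgraph]

lemma spanningCoe_subgraphOfAdj {x y : V} (h : G.Adj x y) :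
    (G.subgraphOfAdj h).spanningCoe = edge x y := by
  ext c d
  simp only [subgraphOfAdj, Subgraph.spanningCoe, edge_adj]
  constructor
  · intro hcd
    rw [Sym2.eq_iff] at hcd
    rcases hcd with ⟨rfl, rfl⟩ | ⟨rfl, rfl⟩
    · exact ⟨Or.inl ⟨rfl, rfl⟩, h.ne⟩
    · exact ⟨Or.inr ⟨rfl, rfl⟩, h.ne'⟩
  · rintro ⟨⟨rfl, rfl⟩ | ⟨rfl, rfl⟩, -⟩ <;> simp [Sym2.eq_iff]

lemma aux_path_union_acyclic {w c : V} (r : G.Walk w c) (hr : r.IsPath)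
    (H : SimpleGraph V) (hH : H.IsAcyclic)
    (hdisj : ∀ z ∈ r.support, z ≠ c → ∀ y, ¬H.Adj z y) :
    (H ⊔ r.toSubgraph.spanningCoe).IsAcyclic := by
  induction r with
  | nil => rw [Walk.toSubgraph, spanningCoe_singleton, sup_bot_eq]; exact hH
  | @cons a b c h r ih =>
    rw [Walk.toSubgraph, spanningCoe_sup, spanningCoe_subgraphOfAdj h,
      sup_left_comm]
    have hane : a ≠ c := by
      intro he
      exact (Walk.cons_isPath_iff h r).mp hr |>.2 (he ▸ r.end_mem_support)
    have hr' := ((Walk.cons_isPath_iff h r).mp hr).1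
    have hans : a ∉ r.support := ((Walk.cons_isPath_iff h r).mp hr).2
    have ihh : (H ⊔ r.toSubgraph.spanningCoe).IsAcyclic := by
      apply ih hr'
      intro z hz hzc y
      exact hdisj z (by simp [Walk.support_cons, hz]) hzc y
    have hnr : ¬(H ⊔ r.toSubgraph.spanningCoe).Reachable a b := by
      apply aux_isolated h.ne
      intro z hz
      rcases hz with hz | hz
      · exact hdisj a (Walk.start_mem_support _) hane z hz
      · exact hans (r.mem_verts_toSubgraph.mp hz.fst_mem)
    have := aux_acyclic_sup_edge ihh hnr
    rwa [sup_comm (edge a b)]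

lemma aux_getVert_injOn {u v : V} {p : G.Walk u v} (hp : p.IsPath) :
    ∀ i ≤ p.length, ∀ j ≤ p.length, p.getVert i = p.getVert j → i = j := by
  induction p with
  | nil => intro i hi j hj _; simp only [Walk.length_nil, Nat.le_zero] at hi hj; omega
  | @cons a b c h q ih =>
    intro i hi j hj hij
    have hq := ((Walk.cons_isPath_iff h q).mp hp).1
    have ha := ((Walk.cons_isPath_iff h q).mp hp).2
    match i, j with
    | 0, 0 => rfl
    | 0, j + 1 =>
      exfalso
      apply ha
      rw [Walk.mem_support_iff_exists_getVert]
      refine ⟨j, ?_, by simpa using hj⟩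
      simpa [Walk.getVert_cons_succ] using hij.symm
    | i + 1, 0 =>
      exfalso
      apply ha
      rw [Walk.mem_support_iff_exists_getVert]
      refine ⟨i, ?_, by simpa using hi⟩
      simpa [Walk.getVert_cons_succ] using hij
    | i + 1, j + 1 =>
      have := ih hq i (by simpa using hi) j (by simpa using hj)
        (by simpa [Walk.getVert_cons_succ] using hij)
      omega

lemma aux_rotate {u v : V} (p : G.Walk u v) (i : ℕ) (hi : i < p.length)
    (hv : G.Adj v (p.getVert i)) :
    ∃ Q : G.Walk (p.getVert (i + 1)) u, Q.support.Perm p.support := by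
  induction p generalizing i with
  | nil => simp at hi
  | @cons a b c h q ih =>
    match i with
    | 0 =>
      have hv' : G.Adj c a := by simpa using hv
      refine ⟨(q.concat hv').copy ?_ rfl, ?_⟩
      · simp [Walk.getVert_cons_succ, Walk.getVert_zero]
      · rw [Walk.support_copy, Walk.support_concat, Walk.support_cons]
        exact List.perm_append_singleton a q.support
    | i + 1 =>
      have hv' : G.Adj c (q.getVert i) := by simpa [Walk.getVert_cons_succ] using hv
      obtain ⟨Q', hQ'⟩ := ih i (by simpa using hi) hv'
      refine ⟨(Q'.concat h.symm).copy ?_ rfl, ?_⟩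
      · simp [Walk.getVert_cons_succ]
      · refine List.Perm.trans (List.Perm.of_eq
          ((Walk.support_copy _ _ _).trans (Walk.support_concat _ _))) ?_
        rw [Walk.support_cons]
        exact (List.perm_append_singleton a Q'.support).trans (hQ'.cons a)

lemma aux_no_ext {u v : V} (hconn : G.Connected)
    (p : G.Walk u v) (hp : p.IsPath)
    (hlongest : ∀ (a b : V) (q : G.Walk a b), q.IsPath → q.length ≤ p.length)
    {w0 : V} (hw0 : w0 ∉ p.support)
    {z x : V} (Q : G.Walk z x) (hQ : Q.IsPath)
    (hsupp : ∀ a, a ∈ Q.support ↔ a ∈ p.support)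
    (hadj : G.Adj x z) : False := by
  classical
  have hQlen : Q.length = p.length := by
    have h1 : Q.support.toFinset = p.support.toFinset := by
      ext a; simp only [List.mem_toFinset]; exact hsupp a
    have h2 : Q.support.toFinset.card = Q.support.length :=
      List.toFinset_card_of_nodup hQ.support_nodup
    have h3 : p.support.toFinset.card = p.support.length :=
      List.toFinset_card_of_nodup hp.support_nodup
    have h4 : Q.support.toFinset.card = p.support.toFinset.card := by rw [h1]
    have := Q.length_support
    have := p.length_support
    omega
  -- boundary dart
  have hx : x ∈ {a | a ∈ Q.support} := Q.end_mem_support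
  have hw0' : w0 ∉ {a | a ∈ Q.support} := fun h => hw0 ((hsupp w0).mp h)
  obtain ⟨W⟩ := hconn.preconnected x w0
  obtain ⟨d, _, hy0, hw1⟩ := W.exists_boundary_dart {a | a ∈ Q.support} hx hw0'
  set y0 := d.fst with hy0def
  set w1 := d.snd with hw1def
  have dadj : G.Adj y0 w1 := d.adj
  have hy0Q : y0 ∈ Q.support := hy0
  have hw1Q : w1 ∉ Q.support := hw1
  -- build rotated path R from y0 covering Q.support
  obtain ⟨t1, R, hRperm⟩ : ∃ (t1 : V) (R : G.Walk y0 t1), R.support.Perm Q.support := by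
    by_cases hy0z : y0 = z
    · exact ⟨x, Q.copy hy0z.symm rfl, by rw [Walk.support_copy]⟩
    · set Q1 := Q.takeUntil y0 hy0Q with hQ1def
      set Q2 := Q.dropUntil y0 hy0Q with hQ2def
      have hspec : Q1.append Q2 = Q := Q.take_spec hy0Q
      have hQ1nn : ¬Q1.Nil := Walk.not_nil_of_ne (fun h => hy0z h.symm)
      have hQ1rnn : ¬Q1.reverse.Nil := by
        rw [Walk.nil_iff_length_eq] at hQ1nn ⊢
        rwa [Walk.length_reverse]
      refine ⟨_, Q2.append (Walk.cons hadj Q1.reverse.tail.reverse), ?_⟩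
      rw [Walk.support_append, Walk.support_cons, List.tail_cons,
        Walk.support_reverse, Walk.support_tail_of_not_nil _ hQ1rnn]
      obtain ⟨s2, h2⟩ : ∃ s2, Q2.support = y0 :: s2 := ⟨_, Walk.support_eq_cons _⟩
      obtain ⟨t, ht⟩ : ∃ t, Q1.reverse.support = y0 :: t := ⟨_, Walk.support_eq_cons _⟩
      have hQ1sup : Q1.support = t.reverse ++ [y0] := by
        rw [← List.reverse_reverse Q1.support, ← Walk.support_reverse, ht]
        simp
      have hQsup : Q.support = (t.reverse ++ [y0]) ++ s2 := by
        rw [← hspec, Walk.support_append, hQ1sup, h2, List.tail_cons]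
      rw [hQsup, ht, h2, List.tail_cons]
      refine List.Perm.trans List.perm_append_comm ?_
      simp [List.append_assoc]
  have hRpath : R.IsPath := by
    rw [Walk.isPath_def]
    exact hRperm.nodup_iff.mpr hQ.support_nodup
  have hRlen : R.length = p.length := by
    have := R.length_support
    have := Q.length_support
    have := hRperm.length_eq
    omega
  have hw1R : w1 ∉ R.support := fun h => hw1Q (hRperm.mem_iff.mp h)
  have hPstar : (Walk.cons dadj.symm R).IsPath :=
    (Walk.cons_isPath_iff _ _).mpr ⟨hRpath, hw1R⟩
  have := hlongest _ _ (Walk.cons dadj.symm R) hPstar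
  rw [Walk.length_cons, hRlen] at this
  omega

lemma aux_path_to_set {S : Set V} {a b : V} (W : G.Walk a b) :
    W.IsPath → b ∈ S →
    ∃ (c : V) (r : G.Walk a c), r.IsPath ∧ c ∈ S ∧ (∀ z ∈ r.support, z ≠ c → z ∉ S) ∧
      (∀ z ∈ r.support, z ∈ W.support) := by
  induction W with
  | nil =>
    intro _ hb
    refine ⟨_, Walk.nil, Walk.IsPath.nil, hb, ?_, fun z hz => hz⟩
    intro z hz hzc
    simp only [Walk.support_nil, List.mem_singleton] at hz
    exact absurd hz hzc
  | @cons a d b h W ih =>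
    intro hW hb
    by_cases ha : a ∈ S
    · refine ⟨a, Walk.nil, Walk.IsPath.nil, ha, ?_, ?_⟩
      · intro z hz hzc
        simp only [Walk.support_nil, List.mem_singleton] at hz
        exact absurd hz hzc
      · intro z hz
        simp only [Walk.support_nil, List.mem_singleton] at hz
        simp [hz, Walk.support_cons]
    · obtain ⟨c, r, hr, hc, hint, hsub⟩ := ih ((Walk.cons_isPath_iff h W).mp hW).1 hb
      have haW : a ∉ W.support := ((Walk.cons_isPath_iff h W).mp hW).2
      have har : a ∉ r.support := fun hh => haW (hsub a hh)
      refine ⟨c, Walk.cons h r, hr.cons har, hc, ?_, ?_⟩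
      · intro z hz hzc
        rw [Walk.support_cons, List.mem_cons] at hz
        rcases hz with rfl | hz
        · exact ha
        · exact hint z hz hzc
      · intro z hz
        rw [Walk.support_cons, List.mem_cons] at hz ⊢
        rcases hz with rfl | hz
        · exact Or.inl rfl
        · exact Or.inr (hsub z hz)

lemma aux_two_nbrs {T : SimpleGraph V} {x a b : V} (ha : T.Adj x a) (hb : T.Adj x b)
    (hab : a ≠ b) (hfin : (T.neighborSet x).Finite) : (T.neighborSet x).ncard ≠ 1 := by
  intro h1
  have hsub : ({a, b} : Set V) ⊆ T.neighborSet x := by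
    rintro y (rfl | rfl)
    · exact ha
    · exact hb
  have := Set.ncard_le_ncard hsub hfin
  rw [Set.ncard_pair hab, h1] at this
  omega

lemma aux_leaf_bound [Fintype V] {u v : V} {p : G.Walk u v} (hp : p.IsPath)
    (T : SimpleGraph V) (hle : p.toSubgraph.spanningCoe ≤ T) :
    {x : V | (T.neighborSet x).ncard = 1} ⊆ {u, v} ∪ {x : V | x ∉ p.support} := by
  intro x hx
  by_contra hmem
  simp only [Set.mem_union, Set.mem_insert_iff, Set.mem_singleton_iff, Set.mem_setOf_eq,
    not_or, not_not] at hmem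
  obtain ⟨⟨hxu, hxv⟩, hxsup⟩ := hmem
  obtain ⟨i, hgv, hile⟩ := Walk.mem_support_iff_exists_getVert.mp hxsup
  have hi0 : i ≠ 0 := fun h => hxu (by rw [← hgv, h, Walk.getVert_zero])
  have hiL : i ≠ p.length := fun h => hxv (by rw [← hgv, h, Walk.getVert_length])
  have hadj1 : T.Adj x (p.getVert (i - 1)) := by
    have := p.toSubgraph_adj_getVert (i := i - 1) (by omega)
    rw [show i - 1 + 1 = i from by omega] at this
    rw [← hgv]
    exact (hle this).symm
  have hadj2 : T.Adj x (p.getVert (i + 1)) := by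
    have := p.toSubgraph_adj_getVert (i := i) (by omega)
    rw [← hgv]
    exact hle this
  have hne : p.getVert (i - 1) ≠ p.getVert (i + 1) := by
    intro h
    have := aux_getVert_injOn hp (i - 1) (by omega) (i + 1) (by omega) h
    omega
  exact aux_two_nbrs hadj1 hadj2 hne (Set.toFinite _) hx

lemma aux_nbr_in_support {u v x : V} {p : G.Walk u v} (hp : p.IsPath)
    (hlongest : ∀ (a b : V) (q : G.Walk a b), q.IsPath → q.length ≤ p.length)
    (h : G.Adj u x) : x ∈ p.support := by
  by_contra hx
  have hpath : (Walk.cons h.symm p).IsPath := (Walk.cons_isPath_iff _ _).mpr ⟨hp, hx⟩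
  have := hlongest _ _ _ hpath
  rw [Walk.length_cons] at this
  omega

end Aux

theorem stmt_11 {V : Type*} [Fintype V] (G : SimpleGraph V) (k : ℕ) (hk : 2 ≤ k)
    (hconn : G.Connected)
    (hσ : ∀ u v : V, u ≠ v → ¬G.Adj u v →
      (Fintype.card V : ℤ) - k ≤ (G.deg' u : ℤ) + (G.deg' v : ℤ))
    (hnotree : ¬G.HasSpanningKEndedTree k)
    (u v : V) (p : G.Walk u v) (hp : p.IsPath)
    (hlongest : ∀ (a b : V) (q : G.Walk a b), q.IsPath → q.length ≤ p.length) :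
    Fintype.card V + 1 = p.support.length + k ∧
    ∀ w : V, w ∉ p.support → ∃ x ∈ p.support, G.Adj w x := by
  classical
  set n := Fintype.card V with hn
  set L := p.length with hL
  have hmsup : p.support.length = L + 1 := p.length_support
  have hsupcard : {x : V | x ∈ p.support}.ncard = L + 1 := by
    rw [show {x : V | x ∈ p.support} = (↑p.support.toFinset : Set V) from by ext; simp]
    rw [Set.ncard_coe_finset, List.toFinset_card_of_nodup hp.support_nodup, hmsup]
  have hcompl : {x : V | x ∈ p.support}.ncard + {x : V | x ∉ p.support}.ncard = n := by
    have h := Set.ncard_add_ncard_compl {x : V | x ∈ p.support} (Set.toFinite _)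
      (Set.toFinite _)
    rw [Nat.card_eq_fintype_card] at h
    rw [show {x : V | x ∉ p.support} = {x : V | x ∈ p.support}ᶜ from by ext; simp]
    exact h
  have hPac : (p.toSubgraph.spanningCoe).IsAcyclic := by
    have := aux_path_union_acyclic p hp ⊥ isAcyclic_bot (fun z _ _ y => by simp)
    rwa [bot_sup_eq] at this
  have huvcard : ({u, v} : Set V).ncard ≤ 2 := by
    have := Set.ncard_insert_le u ({v} : Set V)
    simpa [Set.ncard_singleton] using this
  -- Step 1 : n + 1 ≥ m + k
  have step1 : L + 1 + k ≤ n + 1 := by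
    by_contra hlt
    push_neg at hlt
    obtain ⟨T, hAT, hTG, hT⟩ := aux_exists_tree (Subgraph.spanningCoe_le _) hPac hconn
    apply hnotree
    refine ⟨T, hTG, hT, ?_⟩
    have hsub := aux_leaf_bound hp T hAT
    have h1 := Set.ncard_le_ncard hsub (Set.toFinite _)
    have h2 := Set.ncard_union_le ({u, v} : Set V) {x : V | x ∉ p.support}
    omega
  -- outside vertex
  have hSne : ∃ w0, w0 ∉ p.support := by
    by_contra hall
    push_neg at hall
    have he : {x : V | x ∉ p.support} = ∅ := by
      ext y; simp [hall y]
    rw [he, Set.ncard_empty] at hcompl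
    omega
  obtain ⟨w0, hw0⟩ := hSne
  -- u ≠ v
  have huv : u ≠ v := by
    intro h
    subst h
    have hnil : p = Walk.nil := Walk.isPath_iff_eq_nil.mp hp
    have hw0u : w0 ≠ u := fun h => hw0 (by rw [h, hnil]; simp)
    obtain ⟨W⟩ := hconn.preconnected w0 u
    cases W with
    | nil => exact hw0u rfl
    | @cons _ y _ h q =>
      have hsing : (Walk.cons h Walk.nil).IsPath := by
        rw [Walk.cons_isPath_iff]
        exact ⟨Walk.IsPath.nil, by simp [h.ne]⟩
      have hplen : p.length = 0 := by rw [hnil]; rfl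
      have := hlongest _ _ _ hsing
      rw [Walk.length_cons, Walk.length_nil] at this
      omega
  -- neighbours of endpoints lie on the path
  have Nu_sub : ∀ x, G.Adj u x → x ∈ p.support :=
    fun x h => aux_nbr_in_support hp hlongest h
  have hrev_longest : ∀ (a b : V) (q : G.Walk a b), q.IsPath → q.length ≤ p.reverse.length := by
    intro a b q hq
    rw [Walk.length_reverse]
    exact hlongest a b q hq
  have Nv_sub : ∀ x, G.Adj v x → x ∈ p.support := by
    intro x h
    have := aux_nbr_in_support hp.reverse hrev_longest h
    rwa [Walk.support_reverse, List.mem_reverse] at this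
  -- u and v are not adjacent
  have hadjuv : ¬G.Adj u v := by
    intro hadj
    exact aux_no_ext hconn p hp hlongest hw0 p hp (fun a => Iff.rfl) hadj.symm
  -- index sets
  set F1 : Set ℕ := {i | i < L ∧ G.Adj u (p.getVert (i + 1))} with hF1
  set F2 : Set ℕ := {i | i < L ∧ G.Adj v (p.getVert i)} with hF2
  have himg1 : G.neighborSet u = (fun i => p.getVert (i + 1)) '' F1 := by
    ext x
    simp only [mem_neighborSet, Set.mem_image, Set.mem_setOf_eq, hF1]
    constructor
    · intro h
      obtain ⟨j, hj, hjle⟩ := Walk.mem_support_iff_exists_getVert.mp (Nu_sub x h)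
      have hj0 : j ≠ 0 := by
        intro h0
        rw [h0, Walk.getVert_zero] at hj
        exact h.ne hj
      have hj' : j - 1 + 1 = j := by omega
      exact ⟨j - 1, ⟨by omega, by rw [hj', hj]; exact h⟩, by rw [hj', hj]⟩
    · rintro ⟨i, ⟨hi, hadj⟩, rfl⟩
      exact hadj
  have himg2 : G.neighborSet v = (fun i => p.getVert i) '' F2 := by
    ext x
    simp only [mem_neighborSet, Set.mem_image, Set.mem_setOf_eq, hF2]
    constructor
    · intro h
      obtain ⟨j, hj, hjle⟩ := Walk.mem_support_iff_exists_getVert.mp (Nv_sub x h)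
      have hjL : j ≠ p.length := by
        intro h0
        rw [h0, Walk.getVert_length] at hj
        exact h.ne hj
      exact ⟨j, ⟨by omega, by rw [hj]; exact h⟩, hj⟩
    · rintro ⟨i, ⟨hi, hadj⟩, rfl⟩
      exact hadj
  have hcard1 : G.deg' u = F1.ncard := by
    rw [SimpleGraph.deg', himg1]
    apply Set.ncard_image_of_injOn
    intro i hi j hj hij
    have := aux_getVert_injOn hp (i + 1) (by have := hi.1; omega) (j + 1)
      (by have := hj.1; omega) hij
    omega
  have hcard2 : G.deg' v = F2.ncard := by
    rw [SimpleGraph.deg', himg2]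
    apply Set.ncard_image_of_injOn
    intro i hi j hj hij
    exact aux_getVert_injOn hp i (by have := hi.1; omega) j (by have := hj.1; omega) hij
  have hdisj : Disjoint F1 F2 := by
    rw [Set.disjoint_left]
    intro i hi1 hi2
    exfalso
    obtain ⟨Q, hQperm⟩ := aux_rotate p i hi1.1 hi2.2
    have hQpath : Q.IsPath := by
      rw [Walk.isPath_def]
      exact hQperm.nodup_iff.mpr hp.support_nodup
    exact aux_no_ext hconn p hp hlongest hw0 Q hQpath (fun a => hQperm.mem_iff) hi1.2
  have hdegle : F1.ncard + F2.ncard ≤ L := by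
    have hsub : F1 ∪ F2 ⊆ Set.Iio L := by
      rintro i (hi | hi) <;> exact hi.1
    have h2 := Set.ncard_le_ncard hsub (Set.finite_Iio L)
    have h3 : (Set.Iio L).ncard = L := by
      rw [← Finset.coe_range, Set.ncard_coe_finset, Finset.card_range]
    have h4 := Set.ncard_union_eq hdisj
      (Set.Finite.subset (Set.finite_Iio L) fun i hi => hi.1)
      (Set.Finite.subset (Set.finite_Iio L) fun i hi => hi.1)
    omega
  have hσuv := hσ u v huv hadjuv
  rw [hcard1, hcard2] at hσuv
  have hdegle' : (F1.ncard : ℤ) + F2.ncard ≤ (L : ℤ) := by exact_mod_cast hdegle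
  have goal1 : n + 1 = p.support.length + k := by
    rw [hmsup]
    omega
  refine ⟨goal1, ?_⟩
  -- Part 2
  intro w hw
  by_contra hno
  push_neg at hno
  obtain ⟨W⟩ := hconn.preconnected w u
  obtain ⟨c, r, hr, hcS, hint, -⟩ :=
    aux_path_to_set (S := {x | x ∈ p.support}) W.bypass W.bypass_isPath
      (by exact p.start_mem_support)
  have hwc : w ≠ c := fun h => hw (h ▸ hcS)
  have hrnn : ¬r.Nil := Walk.not_nil_of_ne hwc
  have hlen0 : r.length ≠ 0 := fun h => hrnn (Walk.nil_iff_length_eq.mpr h)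
  have hlen1 : r.length ≠ 1 := by
    intro h1
    have hadj : G.Adj w (r.getVert 1) := Walk.adj_snd hrnn
    have hgv : r.getVert 1 = c := by
      rw [show (1 : ℕ) = r.length from h1.symm, Walk.getVert_length]
    exact hno c hcS (hgv ▸ hadj)
  have hlen2 : 2 ≤ r.length := by omega
  set z := r.getVert (r.length - 1) with hzdef
  have hzsup : z ∈ r.support :=
    Walk.mem_support_iff_exists_getVert.mpr ⟨r.length - 1, rfl, by omega⟩
  have hzc : z ≠ c := by
    intro h
    have hc' : r.getVert r.length = c := r.getVert_length
    have := aux_getVert_injOn hr (r.length - 1) (by omega) r.length le_rfl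
      (by rw [hc', ← hzdef]; exact h)
    omega
  have hzS : z ∉ p.support := hint z hzsup hzc
  have hAac : (p.toSubgraph.spanningCoe ⊔ r.toSubgraph.spanningCoe).IsAcyclic := by
    apply aux_path_union_acyclic r hr _ hPac
    intro z' hz' hz'c y hy
    exact (hint z' hz' hz'c) (p.mem_verts_toSubgraph.mp hy.fst_mem)
  obtain ⟨T, hAT, hTG, hT⟩ := aux_exists_tree
    (sup_le (Subgraph.spanningCoe_le _) (Subgraph.spanningCoe_le _)) hAac hconn
  apply hnotree
  refine ⟨T, hTG, hT, ?_⟩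
  have hrle : r.toSubgraph.spanningCoe ≤ T := le_trans le_sup_right hAT
  have hadjz1 : T.Adj z (r.getVert (r.length - 2)) := by
    have := r.toSubgraph_adj_getVert (i := r.length - 2) (by omega)
    rw [show r.length - 2 + 1 = r.length - 1 from by omega] at this
    exact (hrle this).symm
  have hadjz2 : T.Adj z c := by
    have := r.toSubgraph_adj_getVert (i := r.length - 1) (by omega)
    rw [show r.length - 1 + 1 = r.length from by omega, r.getVert_length] at this
    exact hrle this
  have hnez : r.getVert (r.length - 2) ≠ c := by
    intro h
    have := aux_getVert_injOn hr (r.length - 2) (by omega) r.length le_rfl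
      (by rw [h, r.getVert_length])
    omega
  have hzleaf : (T.neighborSet z).ncard ≠ 1 :=
    aux_two_nbrs hadjz1 hadjz2 hnez (Set.toFinite _)
  have hsub := aux_leaf_bound hp T (le_trans le_sup_left hAT)
  have hsub2 : {x : V | (T.neighborSet x).ncard = 1}
      ⊆ ({u, v} ∪ {x : V | x ∉ p.support}) \ {z} :=
    Set.subset_diff_singleton hsub (fun h => hzleaf h)
  have hzmem : z ∈ ({u, v} ∪ {x : V | x ∉ p.support} : Set V) := Or.inr hzS
  have hcard := Set.ncard_le_ncard hsub2 (Set.toFinite _)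
  rw [Set.ncard_diff_singleton_of_mem hzmem] at hcard
  have h2 := Set.ncard_union_le ({u, v} : Set V) {x : V | x ∉ p.support}
  omega
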